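/- Let N, k be positive natural numbers, let H ∈ ℝ^{N×N}, U ∈ ℝ^{N×k}, Ĥ ∈ ℝ^{k×k}, u_{k+1} ∈ ℝ^N, and ĥ ∈ ℝ, and suppose the Arnoldi relation H U = U Ĥ + ĥ u_{k+1} e_kᵀ holds, where e_k ∈ ℝ^k is the k-th standard basis vector. For each integer i ≥ 1 define φ_i(Ĥ) = Σ_{m≥0} Ĥ^m / (m+i)! ∈ ℝ^{k×k}. Let u₁ = U e₁, where e₁ ∈ ℝ^k is the first standard basis vector. Then the error of the Krylov approximation of the matrix exponential satisfies the expansion exp(H) u₁ - U exp(Ĥ) e₁ = ĥ · Σ_{i=1}^{∞} (e_kᵀ φ_i(Ĥ) e₁) H^{i-1} u_{k+1}, where the series on the right converges in ℝ^N. -/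

import Mathlib

open Matrix

/-- `φᵢ(M) = Σ_{m≥0} Mᵐ/(m+i)!`, the matrix version of the entire functions
`φ₀(z) = eᶻ`, `φ_{i+1}(z) = (φᵢ(z) - φᵢ(0))/z`. -/
noncomputable def phiMat (k : ℕ) (i : ℕ) (M : Matrix (Fin k) (Fin k) ℝ) :
    Matrix (Fin k) (Fin k) ℝ :=
  ∑' m : ℕ, ((m + i).factorial : ℝ)⁻¹ • M ^ m

private lemma vecMulVec_mulVec' {m n : Type*} [Fintype n] (w : m → ℝ) (q : n → ℝ) (x : n → ℝ) :
    Matrix.vecMulVec w q *ᵥ x = (q ⬝ᵥ x) • w := by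
  ext i
  simp only [Matrix.mulVec, Matrix.vecMulVec_apply, dotProduct, Pi.smul_apply,
    smul_eq_mul, Finset.sum_mul]
  exact Finset.sum_congr rfl fun j _ => by ring

private lemma commutator_pow {N k : ℕ} (H : Matrix (Fin N) (Fin N) ℝ)
    (U : Matrix (Fin N) (Fin k) ℝ) (Hhat : Matrix (Fin k) (Fin k) ℝ)
    (E : Matrix (Fin N) (Fin k) ℝ) (h : H * U = U * Hhat + E) (m : ℕ) :
    H ^ m * U - U * Hhat ^ m = ∑ j ∈ Finset.range m, H ^ (m - 1 - j) * E * Hhat ^ j := by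
  have hE : H * U - U * Hhat = E := by rw [h]; exact add_sub_cancel_left _ _
  induction m with
  | zero => simp
  | succ m ih =>
    have key : H ^ (m + 1) * U - U * Hhat ^ (m + 1)
        = H * (H ^ m * U - U * Hhat ^ m) + (H * U - U * Hhat) * Hhat ^ m := by
      rw [pow_succ' H, pow_succ' Hhat]
      simp only [Matrix.mul_sub, Matrix.sub_mul, Matrix.mul_assoc]
      abel
    rw [key, ih, hE, Matrix.mul_sum, Finset.sum_range_succ]
    congr 1
    · refine Finset.sum_congr rfl fun j hj => ?_
      rw [Finset.mem_range] at hj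
      rw [← Matrix.mul_assoc, ← Matrix.mul_assoc, ← pow_succ' H]
      congr 3
      omega
    · simp [Nat.sub_self]

section MatrixNorm
attribute [local instance] Matrix.linftyOpSemiNormedRing Matrix.linftyOpNormedRing
  Matrix.linftyOpNormedAlgebra

private lemma pow_mulVec_norm_le {n : ℕ} (M : Matrix (Fin n) (Fin n) ℝ) (v : Fin n → ℝ)
    (j : ℕ) : ‖M ^ j *ᵥ v‖ ≤ ‖M‖ ^ j * ‖v‖ := by
  induction j with
  | zero => simp [Matrix.one_mulVec]
  | succ j ih =>
    rw [pow_succ' M, ← Matrix.mulVec_mulVec]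
    calc ‖M *ᵥ (M ^ j *ᵥ v)‖ ≤ ‖M‖ * ‖M ^ j *ᵥ v‖ := Matrix.linfty_opNorm_mulVec _ _
    _ ≤ ‖M‖ * (‖M‖ ^ j * ‖v‖) := by
        exact mul_le_mul_of_nonneg_left ih (norm_nonneg M)
    _ = ‖M‖ ^ (j + 1) * ‖v‖ := by ring

private lemma summable_phi_aux {n : ℕ} (M : Matrix (Fin n) (Fin n) ℝ) (i : ℕ) :
    Summable (fun m : ℕ => ((m + i).factorial : ℝ)⁻¹ • M ^ m) := by
  have hpow : ∀ m : ℕ, ‖M ^ m‖ ≤ ‖(1 : Matrix (Fin n) (Fin n) ℝ)‖ * ‖M‖ ^ m := by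
    intro m
    induction m with
    | zero => rw [pow_zero, pow_zero, mul_one]
    | succ m ih =>
      rw [pow_succ]
      calc ‖M ^ m * M‖ ≤ ‖M ^ m‖ * ‖M‖ := norm_mul_le _ _
      _ ≤ ‖(1 : Matrix (Fin n) (Fin n) ℝ)‖ * ‖M‖ ^ m * ‖M‖ :=
        mul_le_mul_of_nonneg_right ih (norm_nonneg M)
      _ = ‖(1 : Matrix (Fin n) (Fin n) ℝ)‖ * ‖M‖ ^ (m + 1) := by ring
  refine Summable.of_norm_bounded
    (g := fun m => ‖(1 : Matrix (Fin n) (Fin n) ℝ)‖ * (‖M‖ ^ m / m.factorial))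
    ((Real.summable_pow_div_factorial ‖M‖).mul_left _) ?_
  intro m
  rw [norm_smul, Real.norm_eq_abs,
    abs_of_nonneg (by positivity : (0:ℝ) ≤ ((m + i).factorial : ℝ)⁻¹)]
  have h2 : ((m + i).factorial : ℝ)⁻¹ ≤ (m.factorial : ℝ)⁻¹ := by
    gcongr
    omega
  calc ((m + i).factorial : ℝ)⁻¹ * ‖M ^ m‖
      ≤ (m.factorial : ℝ)⁻¹ * (‖(1 : Matrix (Fin n) (Fin n) ℝ)‖ * ‖M‖ ^ m) :=
        mul_le_mul h2 (hpow m) (norm_nonneg _) (by positivity)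
    _ = ‖(1 : Matrix (Fin n) (Fin n) ℝ)‖ * (‖M‖ ^ m / m.factorial) := by ring

private lemma exp_hasSum {n : ℕ} (M : Matrix (Fin n) (Fin n) ℝ) :
    HasSum (fun m : ℕ => ((m.factorial : ℝ))⁻¹ • M ^ m) (NormedSpace.exp M) :=
  NormedSpace.exp_series_hasSum_exp' (𝕂 := ℝ) M

end MatrixNorm

/-- Saad's error expansion for the Krylov approximation of the matrix
exponential: if `H U = U Ĥ + ĥ u_{k+1} eₖᵀ`, then
`exp(H) u₁ - U exp(Ĥ) e₁ = ĥ Σ_{i≥1} (eₖᵀ φᵢ(Ĥ) e₁) H^{i-1} u_{k+1}`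
(the series being indexed here by `i ≥ 0` after the shift `i ↦ i + 1`),
and the series converges in `ℝ^N`. -/
theorem krylov_exp_error_expansion (N k : ℕ) (hN : 0 < N) (hk : 0 < k)
    (H : Matrix (Fin N) (Fin N) ℝ) (U : Matrix (Fin N) (Fin k) ℝ)
    (Hhat : Matrix (Fin k) (Fin k) ℝ) (uNext : Fin N → ℝ) (hhat : ℝ)
    (harnoldi : H * U = U * Hhat
      + hhat • Matrix.vecMulVec uNext
          (Pi.single ⟨k - 1, Nat.sub_lt hk one_pos⟩ 1 : Fin k → ℝ)) :
    HasSum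
      (fun i : ℕ =>
        (hhat * ((Pi.single ⟨k - 1, Nat.sub_lt hk one_pos⟩ 1 : Fin k → ℝ) ⬝ᵥ
          (phiMat k (i + 1) Hhat *ᵥ (Pi.single ⟨0, hk⟩ 1 : Fin k → ℝ)))) •
          (H ^ i *ᵥ uNext))
      (NormedSpace.exp H *ᵥ (U *ᵥ (Pi.single ⟨0, hk⟩ 1 : Fin k → ℝ))
        - U *ᵥ (NormedSpace.exp Hhat *ᵥ (Pi.single ⟨0, hk⟩ 1 : Fin k → ℝ))) := by
  classical
  letI : SeminormedRing (Matrix (Fin N) (Fin N) ℝ) := Matrix.linftyOpSemiNormedRing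
  letI : NormedRing (Matrix (Fin N) (Fin N) ℝ) := Matrix.linftyOpNormedRing
  letI : NormedAlgebra ℝ (Matrix (Fin N) (Fin N) ℝ) := Matrix.linftyOpNormedAlgebra
  letI : SeminormedRing (Matrix (Fin k) (Fin k) ℝ) := Matrix.linftyOpSemiNormedRing
  letI : NormedRing (Matrix (Fin k) (Fin k) ℝ) := Matrix.linftyOpNormedRing
  letI : NormedAlgebra ℝ (Matrix (Fin k) (Fin k) ℝ) := Matrix.linftyOpNormedAlgebra
  set idx : Fin k := ⟨k - 1, Nat.sub_lt hk one_pos⟩ with hidx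
  set ek : Fin k → ℝ := Pi.single idx 1 with hek
  set e1 : Fin k → ℝ := Pi.single (⟨0, hk⟩ : Fin k) 1 with he1
  set E : Matrix (Fin N) (Fin k) ℝ := hhat • Matrix.vecMulVec uNext ek with hEdef
  set a : ℕ × ℕ → (Fin N → ℝ) := fun p =>
    (hhat * (((p.2 + (p.1 + 1)).factorial : ℝ)⁻¹ * ((Hhat ^ p.2 *ᵥ e1) idx))) •
      (H ^ p.1 *ᵥ uNext) with ha
  -- Summability of the double series
  have summable_a : Summable a := by
    refine Summable.of_norm_bounded
      (g := fun p : ℕ × ℕ => (|hhat| * ‖uNext‖ * ‖e1‖) *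
        ((‖H‖ ^ p.1 / p.1.factorial) * (‖Hhat‖ ^ p.2 / p.2.factorial))) ?_ ?_
    · exact ((Real.summable_pow_div_factorial ‖H‖).mul_of_nonneg
        (Real.summable_pow_div_factorial ‖Hhat‖)
        (fun i => by positivity) (fun j => by positivity)).mul_left _
    · rintro ⟨i, j⟩
      have h1 : |(Hhat ^ j *ᵥ e1) idx| ≤ ‖Hhat‖ ^ j * ‖e1‖ := by
        calc |(Hhat ^ j *ᵥ e1) idx| ≤ ‖Hhat ^ j *ᵥ e1‖ := by
              rw [← Real.norm_eq_abs]; exact norm_le_pi_norm _ idx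
        _ ≤ ‖Hhat‖ ^ j * ‖e1‖ := pow_mulVec_norm_le Hhat e1 j
      have h2 : ‖H ^ i *ᵥ uNext‖ ≤ ‖H‖ ^ i * ‖uNext‖ := pow_mulVec_norm_le H uNext i
      have h3 : ((j + (i + 1)).factorial : ℝ)⁻¹ ≤ (i.factorial : ℝ)⁻¹ * (j.factorial : ℝ)⁻¹ := by
        rw [← mul_inv]
        have hle : (i.factorial * j.factorial : ℕ) ≤ (j + (i + 1)).factorial := by
          have d1 : i.factorial * j.factorial ≤ (i + j).factorial :=
            Nat.le_of_dvd (Nat.factorial_pos _)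
              (Nat.factorial_mul_factorial_dvd_factorial_add i j)
          have d2 : (i + j).factorial ≤ (j + (i + 1)).factorial := Nat.factorial_le (by omega)
          omega
        have hpos : (0 : ℝ) < (i.factorial : ℝ) * (j.factorial : ℝ) := by positivity
        apply inv_anti₀ hpos
        exact_mod_cast hle
      have key : ‖a (i, j)‖ = |hhat| * (((j + (i + 1)).factorial : ℝ)⁻¹ *
          |(Hhat ^ j *ᵥ e1) idx|) * ‖H ^ i *ᵥ uNext‖ := by
        rw [ha]
        rw [norm_smul, Real.norm_eq_abs, abs_mul, abs_mul,
          abs_of_nonneg (by positivity : (0:ℝ) ≤ ((j + (i + 1)).factorial : ℝ)⁻¹)]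
      calc ‖a (i, j)‖
          = |hhat| * (((j + (i + 1)).factorial : ℝ)⁻¹ *
            |(Hhat ^ j *ᵥ e1) idx|) * ‖H ^ i *ᵥ uNext‖ := key
        _ * (((j + (i + 1)).factorial : ℝ)⁻¹ * |(Hhat ^ j *ᵥ e1) idx|) *
            ‖H ^ i *ᵥ uNext‖
          ≤ |hhat| * (((i.factorial : ℝ)⁻¹ * (j.factorial : ℝ)⁻¹) * (‖Hhat‖ ^ j * ‖e1‖)) *
            (‖H‖ ^ i * ‖uNext‖) := by
            have hw : (0:ℝ) ≤ |(Hhat ^ j *ᵥ e1) idx| := abs_nonneg _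
            gcongr
        _ = (|hhat| * ‖uNext‖ * ‖e1‖) *
            ((‖H‖ ^ i / i.factorial) * (‖Hhat‖ ^ j / j.factorial)) := by ring
  -- fiberwise sums in `j` give the φ-function coefficients
  let L3 : Matrix (Fin k) (Fin k) ℝ →ₗ[ℝ] ℝ :=
    { toFun := fun M => (M *ᵥ e1) idx
      map_add' := fun A B => by simp [Matrix.add_mulVec]
      map_smul' := fun c A => by simp [Matrix.smul_mulVec] }
  have hL3 : Continuous L3 := LinearMap.continuous_of_finiteDimensional L3
  have hfiber : ∀ i : ℕ, HasSum (fun j => a (i, j))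
      ((hhat * (ek ⬝ᵥ (phiMat k (i + 1) Hhat *ᵥ e1))) • (H ^ i *ᵥ uNext)) := by
    intro i
    have hphi : HasSum (fun m : ℕ => ((m + (i + 1)).factorial : ℝ)⁻¹ • Hhat ^ m)
        (phiMat k (i + 1) Hhat) := (summable_phi_aux Hhat (i + 1)).hasSum
    have h2 := hphi.map L3.toAddMonoidHom hL3
    have h2' : HasSum (fun m : ℕ => ((m + (i + 1)).factorial : ℝ)⁻¹ * ((Hhat ^ m *ᵥ e1) idx))
        ((phiMat k (i + 1) Hhat *ᵥ e1) idx) := by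
      simpa [L3, Function.comp_def, Matrix.smul_mulVec] using h2
    have h3 := (h2'.mul_left hhat).smul_const (H ^ i *ᵥ uNext)
    have hdot : ek ⬝ᵥ (phiMat k (i + 1) Hhat *ᵥ e1) = (phiMat k (i + 1) Hhat *ᵥ e1) idx := by
      rw [hek, single_dotProduct, one_mul]
    rw [hdot]
    exact h3
  -- the antidiagonal sums
  have hcomm := commutator_pow H U Hhat E harnoldi
  let LR : Matrix (Fin N) (Fin k) ℝ →ₗ[ℝ] (Fin N → ℝ) :=
    { toFun := fun M => M *ᵥ e1
      map_add' := fun A B => Matrix.add_mulVec A B e1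
      map_smul' := fun c A => by simp [Matrix.smul_mulVec] }
  have hg : ∀ n : ℕ, ∑ p ∈ Finset.HasAntidiagonal.antidiagonal n, a p
      = ((n + 1).factorial : ℝ)⁻¹ • (H ^ (n + 1) *ᵥ (U *ᵥ e1))
        - ((n + 1).factorial : ℝ)⁻¹ • (U *ᵥ (Hhat ^ (n + 1) *ᵥ e1)) := by
    intro n
    have hmv : (H ^ (n + 1) * U - U * Hhat ^ (n + 1)) *ᵥ e1
        = ∑ j ∈ Finset.range (n + 1),
            (hhat * ((Hhat ^ j *ᵥ e1) idx)) • (H ^ (n - j) *ᵥ uNext) := by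
      rw [hcomm (n + 1)]
      have : (∑ j ∈ Finset.range (n + 1), H ^ (n + 1 - 1 - j) * E * Hhat ^ j) *ᵥ e1
          = ∑ j ∈ Finset.range (n + 1), (H ^ (n + 1 - 1 - j) * E * Hhat ^ j) *ᵥ e1 :=
        map_sum LR _ _
      rw [this]
      refine Finset.sum_congr rfl fun j hj => ?_
      rw [Finset.mem_range] at hj
      have hexp : n + 1 - 1 - j = n - j := by omega
      rw [hexp, ← Matrix.mulVec_mulVec, ← Matrix.mulVec_mulVec, hEdef,
        Matrix.smul_mulVec, vecMulVec_mulVec', hek, single_dotProduct, one_mul,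
        smul_smul, Matrix.mulVec_smul]
    rw [Finset.Nat.sum_antidiagonal_eq_sum_range_succ_mk]
    have hterm : ∀ i ∈ Finset.range (n + 1), a (i, n - i)
        = ((n + 1).factorial : ℝ)⁻¹ •
            ((hhat * ((Hhat ^ (n - i) *ᵥ e1) idx)) • (H ^ i *ᵥ uNext)) := by
      intro i hi
      rw [Finset.mem_range] at hi
      have hfac : (n - i) + (i + 1) = n + 1 := by omega
      rw [ha]
      simp only
      rw [hfac, smul_smul]
      congr 1
      ring
    rw [Finset.sum_congr rfl hterm, ← Finset.smul_sum]
    have hreflect : ∑ i ∈ Finset.range (n + 1),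
          (hhat * ((Hhat ^ (n - i) *ᵥ e1) idx)) • (H ^ i *ᵥ uNext)
        = ∑ j ∈ Finset.range (n + 1),
          (hhat * ((Hhat ^ j *ᵥ e1) idx)) • (H ^ (n - j) *ᵥ uNext) := by
      rw [← Finset.sum_range_reflect]
      refine Finset.sum_congr rfl fun i hi => ?_
      rw [Finset.mem_range] at hi
      have h1 : n + 1 - 1 - i = n - i := by omega
      have h2 : n - (n - i) = i := by omega
      rw [h1, h2]
    rw [hreflect, ← hmv, Matrix.sub_mulVec, ← Matrix.mulVec_mulVec, ← Matrix.mulVec_mulVec,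
      smul_sub]
  -- the exponential series
  let L1 : Matrix (Fin N) (Fin N) ℝ →ₗ[ℝ] (Fin N → ℝ) :=
    { toFun := fun M => M *ᵥ (U *ᵥ e1)
      map_add' := fun A B => Matrix.add_mulVec A B _
      map_smul' := fun c A => by simp [Matrix.smul_mulVec] }
  let L2 : Matrix (Fin k) (Fin k) ℝ →ₗ[ℝ] (Fin N → ℝ) :=
    { toFun := fun M => U *ᵥ (M *ᵥ e1)
      map_add' := fun A B => by simp [Matrix.add_mulVec, Matrix.mulVec_add]
      map_smul' := fun c A => by simp [Matrix.smul_mulVec, Matrix.mulVec_smul] }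
  have hL1 : Continuous L1 := LinearMap.continuous_of_finiteDimensional L1
  have hL2 : Continuous L2 := LinearMap.continuous_of_finiteDimensional L2
  have hH' : HasSum (fun m : ℕ => (m.factorial : ℝ)⁻¹ • (H ^ m *ᵥ (U *ᵥ e1)))
      (NormedSpace.exp H *ᵥ (U *ᵥ e1)) := by
    simpa [L1, Function.comp_def, smul_mul_assoc, Matrix.smul_mulVec]
      using (exp_hasSum H).map L1.toAddMonoidHom hL1
  have hHhat' : HasSum (fun m : ℕ => (m.factorial : ℝ)⁻¹ • (U *ᵥ (Hhat ^ m *ᵥ e1)))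
      (U *ᵥ (NormedSpace.exp Hhat *ᵥ e1)) := by
    simpa [L2, Function.comp_def, mul_smul_comm, Matrix.smul_mulVec, Matrix.mulVec_smul]
      using (exp_hasSum Hhat).map L2.toAddMonoidHom hL2
  have hHs : HasSum (fun n : ℕ => ((n + 1).factorial : ℝ)⁻¹ • (H ^ (n + 1) *ᵥ (U *ᵥ e1)))
      (NormedSpace.exp H *ᵥ (U *ᵥ e1) - U *ᵥ e1) := by
    have := (hasSum_nat_add_iff'
      (f := fun m : ℕ => (m.factorial : ℝ)⁻¹ • (H ^ m *ᵥ (U *ᵥ e1))) 1).mpr hH'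
    simpa [Matrix.one_mulVec] using this
  have hHhats : HasSum (fun n : ℕ => ((n + 1).factorial : ℝ)⁻¹ • (U *ᵥ (Hhat ^ (n + 1) *ᵥ e1)))
      (U *ᵥ (NormedSpace.exp Hhat *ᵥ e1) - U *ᵥ e1) := by
    have := (hasSum_nat_add_iff'
      (f := fun m : ℕ => (m.factorial : ℝ)⁻¹ • (U *ᵥ (Hhat ^ m *ᵥ e1))) 1).mpr hHhat'
    simpa [Matrix.one_mulVec] using this
  have hgS : HasSum (fun n : ℕ => ∑ p ∈ Finset.HasAntidiagonal.antidiagonal n, a p)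
      (NormedSpace.exp H *ᵥ (U *ᵥ e1) - U *ᵥ (NormedSpace.exp Hhat *ᵥ e1)) := by
    have h := hHs.sub hHhats
    rw [sub_sub_sub_cancel_right] at h
    simp only [hg]
    exact h
  -- reassemble via the sigma-type of antidiagonals
  have hfib2 : ∀ n : ℕ, HasSum
      (fun p : (Finset.HasAntidiagonal.antidiagonal n : Finset (ℕ × ℕ)) => a p)
      (∑ p ∈ Finset.HasAntidiagonal.antidiagonal n, a p) := by
    intro n
    have := hasSum_fintype (fun p : (Finset.HasAntidiagonal.antidiagonal n : Finset (ℕ × ℕ)) => a p)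
    rwa [Finset.sum_coe_sort] at this
  have hsum_sigma : Summable
      (fun x : (Σ n : ℕ, (Finset.HasAntidiagonal.antidiagonal n : Finset (ℕ × ℕ))) =>
        a (Finset.HasAntidiagonal.sigmaAntidiagonalEquivProd x)) :=
    (Equiv.summable_iff Finset.HasAntidiagonal.sigmaAntidiagonalEquivProd).mpr summable_a
  have hsigma : HasSum
      (fun x : (Σ n : ℕ, (Finset.HasAntidiagonal.antidiagonal n : Finset (ℕ × ℕ))) =>
        a (Finset.HasAntidiagonal.sigmaAntidiagonalEquivProd x))
      (NormedSpace.exp H *ᵥ (U *ᵥ e1) - U *ᵥ (NormedSpace.exp Hhat *ᵥ e1)) :=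
    HasSum.sigma_of_hasSum hgS (fun n => hfib2 n) hsum_sigma
  have hasSum_a : HasSum a
      (NormedSpace.exp H *ᵥ (U *ᵥ e1) - U *ᵥ (NormedSpace.exp Hhat *ᵥ e1)) :=
    (Equiv.hasSum_iff Finset.HasAntidiagonal.sigmaAntidiagonalEquivProd).mp hsigma
  exact hasSum_a.prod_fiberwise hfiber
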